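/- Let f: R^N -> R be convex and L-smooth, g: R^N -> R continuous and convex, and s = 1/L. Define the generalized gradient G_{sF}(u) = (1/s)(u - P_{sg}(u - s ∇f(u))). If v_i = u_i - e_i is an approximation of u_i with error e_i, then ||G_{sF}(v_i)|| ≤ L√2 ||e_i|| + ||G_{sF}(u_i)||. -/

import Mathlib

open Set
open scoped RealInnerProductSpace

section Helpers

variable {E : Type*} [NormedAddCommGroup E] [InnerProductSpace ℝ E] [CompleteSpace E]
variable {f : E → ℝ} {f' : E → E}

/-- Directional derivative of `f` along a line, from the gradient. -/
lemma aux_hasDerivAt_line (hgrad : ∀ x, HasGradientAt f (f' x) x) (x d : E) (t : ℝ) :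
    HasDerivAt (fun t : ℝ => f (x + t • d)) ⟪f' (x + t • d), d⟫ t := by
  have hc : HasDerivAt (fun t : ℝ => x + t • d) d t := by
    simpa using ((hasDerivAt_id t).smul_const d).const_add x
  have hf := hasGradientAt_iff_hasFDerivAt.mp (hgrad (x + t • d))
  have := hf.comp_hasDerivAt t hc
  simpa [InnerProductSpace.toDual_apply_apply, Function.comp_def] using this

/-- Gradient inequality for convex functions. -/
lemma aux_grad_ineq (hconv : ConvexOn ℝ Set.univ f)
    (hgrad : ∀ x, HasGradientAt f (f' x) x) (x y : E) :
    f x + ⟪f' x, y - x⟫ ≤ f y := by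
  set φ : ℝ → ℝ := fun t => f (x + t • (y - x)) with hφ
  have hφconv : ConvexOn ℝ Set.univ φ := by
    have h := hconv.comp_affineMap (AffineMap.lineMap x y : ℝ →ᵃ[ℝ] E)
    have he : φ = f ∘ (AffineMap.lineMap x y : ℝ →ᵃ[ℝ] E) := by
      funext t
      simp [hφ, AffineMap.lineMap_apply, add_comm]
    rw [he]
    simpa using h
  have hder : HasDerivAt φ ⟪f' x, y - x⟫ 0 := by
    have := aux_hasDerivAt_line hgrad x (y - x) 0
    simpa using this
  have hs := hφconv.le_slope_of_hasDerivAt (mem_univ (0:ℝ)) (mem_univ (1:ℝ)) one_pos hder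
  have hs1 : slope φ 0 1 = f y - f x := by
    simp [slope_def_field, hφ]
  rw [hs1] at hs
  linarith

/-- Descent lemma for `L`-smooth functions. -/
lemma aux_descent {L : ℝ} (hL : 0 < L) (hgrad : ∀ x, HasGradientAt f (f' x) x)
    (hlip : LipschitzWith (Real.toNNReal L) f') (x y : E) :
    f y ≤ f x + ⟪f' x, y - x⟫ + L / 2 * ‖y - x‖ ^ 2 := by
  set d := y - x with hd
  set ψ : ℝ → ℝ := fun t => f (x + t • d) - t * ⟪f' x, d⟫ - L / 2 * t ^ 2 * ‖d‖ ^ 2 with hψ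
  have hder : ∀ t : ℝ, HasDerivAt ψ
      (⟪f' (x + t • d), d⟫ - ⟪f' x, d⟫ - L * t * ‖d‖ ^ 2) t := by
    intro t
    have h1 := aux_hasDerivAt_line hgrad x d t
    have h2 : HasDerivAt (fun t : ℝ => t * ⟪f' x, d⟫) ⟪f' x, d⟫ t := by
      simpa using (hasDerivAt_id t).mul_const ⟪f' x, d⟫
    have h3 : HasDerivAt (fun t : ℝ => L / 2 * t ^ 2 * ‖d‖ ^ 2) (L * t * ‖d‖ ^ 2) t := by
      have := ((hasDerivAt_pow 2 t).const_mul (L / 2)).mul_const (‖d‖ ^ 2)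
      exact this.congr_deriv (by rw [show (2:ℕ) - 1 = 1 from rfl]; push_cast; ring)
    exact (h1.sub h2).sub h3
  have hcont : Continuous ψ := by
    have : Differentiable ℝ ψ := fun t => (hder t).differentiableAt
    exact this.continuous
  have hanti : AntitoneOn ψ (Icc (0:ℝ) 1) := by
    apply antitoneOn_of_deriv_nonpos (convex_Icc 0 1) hcont.continuousOn
    · intro t _
      exact (hder t).differentiableAt.differentiableWithinAt
    · intro t ht
      rw [interior_Icc] at ht
      rw [(hder t).deriv]
      have hb : ⟪f' (x + t • d) - f' x, d⟫ ≤ ‖f' (x + t • d) - f' x‖ * ‖d‖ :=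
        real_inner_le_norm _ _
      have hlipb : ‖f' (x + t • d) - f' x‖ ≤ L * (t * ‖d‖) := by
        have h0 := hlip.dist_le_mul (x + t • d) x
        rw [dist_eq_norm] at h0
        have hc : (Real.toNNReal L : ℝ) = L := Real.coe_toNNReal L hL.le
        have h2 : dist (x + t • d) x = t * ‖d‖ := by
          rw [dist_eq_norm]
          simp [norm_smul, abs_of_pos ht.1]
        rw [hc, h2] at h0
        simpa using h0
      have hdn : (0:ℝ) ≤ ‖d‖ := norm_nonneg d
      have hfinal : ⟪f' (x + t • d) - f' x, d⟫ ≤ L * t * ‖d‖ ^ 2 := by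
        calc ⟪f' (x + t • d) - f' x, d⟫ ≤ ‖f' (x + t • d) - f' x‖ * ‖d‖ := hb
          _ ≤ (L * (t * ‖d‖)) * ‖d‖ := mul_le_mul_of_nonneg_right hlipb hdn
          _ = L * t * ‖d‖ ^ 2 := by ring
      have hi : ⟪f' (x + t • d) - f' x, d⟫ = ⟪f' (x + t • d), d⟫ - ⟪f' x, d⟫ := by
        rw [inner_sub_left]
      rw [hi] at hfinal
      linarith
  have h01 := hanti (by norm_num : (0:ℝ) ∈ Icc (0:ℝ) 1) (by norm_num : (1:ℝ) ∈ Icc (0:ℝ) 1)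
    (by norm_num)
  simp only [hψ, zero_smul, add_zero, zero_mul, one_smul, one_pow, mul_one] at h01
  have hyy : x + d = y := by rw [hd]; abel
  rw [hyy] at h01
  linarith [h01]

/-- The lower quadratic bound combining convexity and smoothness. -/
lemma aux_lower {L : ℝ} (hL : 0 < L) (hconv : ConvexOn ℝ Set.univ f)
    (hgrad : ∀ x, HasGradientAt f (f' x) x)
    (hlip : LipschitzWith (Real.toNNReal L) f') (x y : E) :
    f x + ⟪f' x, y - x⟫ + 1 / (2 * L) * ‖f' y - f' x‖ ^ 2 ≤ f y := by
  set Δ := f' y - f' x with hΔ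
  set z := y - (1 / L) • Δ with hz
  have h1 : f x + ⟪f' x, z - x⟫ ≤ f z := aux_grad_ineq hconv hgrad x z
  have h2 : f z ≤ f y + ⟪f' y, z - y⟫ + L / 2 * ‖z - y‖ ^ 2 := aux_descent hL hgrad hlip y z
  have hzy : z - y = -((1 / L) • Δ) := by rw [hz]; abel
  have hzx : z - x = (y - x) - (1 / L) • Δ := by rw [hz]; abel
  have e1 : ⟪f' y, z - y⟫ = -(1 / L) * ⟪f' y, Δ⟫ := by
    rw [hzy, inner_neg_right, real_inner_smul_right]; ring
  have e2 : ‖z - y‖ ^ 2 = (1 / L) ^ 2 * ‖Δ‖ ^ 2 := by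
    rw [hzy, norm_neg, norm_smul, Real.norm_eq_abs]
    rw [abs_of_pos (by positivity : (0:ℝ) < 1 / L), mul_pow]
  have e3 : ⟪f' x, z - x⟫ = ⟪f' x, y - x⟫ - (1 / L) * ⟪f' x, Δ⟫ := by
    rw [hzx, inner_sub_right, real_inner_smul_right]
  have e4 : ⟪f' y, Δ⟫ - ⟪f' x, Δ⟫ = ‖Δ‖ ^ 2 := by
    rw [← inner_sub_left, ← hΔ, real_inner_self_eq_norm_sq]
  rw [e1, e2] at h2
  rw [e3] at h1
  have hL' : (0:ℝ) < 1 / L := by positivity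
  have hcomp : L / 2 * ((1 / L) ^ 2 * ‖Δ‖ ^ 2) = 1 / (2 * L) * ‖Δ‖ ^ 2 := by
    field_simp
  rw [hcomp] at h2
  have e5 : 1 / L * ⟪f' y, Δ⟫ - 1 / L * ⟪f' x, Δ⟫ = 1 / L * ‖Δ‖ ^ 2 := by
    rw [← mul_sub, e4]
  have e6 : 1 / L * ‖Δ‖ ^ 2 = 2 * (1 / (2 * L) * ‖Δ‖ ^ 2) := by
    field_simp
  linarith [h1, h2, e5, e6]

/-- Cocoercivity of the gradient (Baillon–Haddad). -/
lemma aux_cocoercive {L : ℝ} (hL : 0 < L) (hconv : ConvexOn ℝ Set.univ f)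
    (hgrad : ∀ x, HasGradientAt f (f' x) x)
    (hlip : LipschitzWith (Real.toNNReal L) f') (x y : E) :
    (1 / L) * ‖f' x - f' y‖ ^ 2 ≤ ⟪f' x - f' y, x - y⟫ := by
  have h1 := aux_lower hL hconv hgrad hlip x y
  have h2 := aux_lower hL hconv hgrad hlip y x
  have hn : ‖f' x - f' y‖ = ‖f' y - f' x‖ := by rw [norm_sub_rev]
  have e1 : ⟪f' x, y - x⟫ + ⟪f' y, x - y⟫ = -⟪f' x - f' y, x - y⟫ := by
    rw [inner_sub_left]
    have h3 : ⟪f' x, y - x⟫ = -⟪f' x, x - y⟫ := by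
      rw [← inner_neg_right]; congr 1; abel
    rw [h3]; ring
  have h12 : (0:ℝ) < 1 / (2 * L) := by positivity
  rw [hn]
  have hn2 : ‖f' x - f' y‖ ^ 2 = ‖f' y - f' x‖ ^ 2 := by rw [hn]
  have e6 : 1 / L * ‖f' y - f' x‖ ^ 2 = 2 * (1 / (2 * L) * ‖f' y - f' x‖ ^ 2) := by
    field_simp
  rw [hn2] at h2
  linarith [h1, h2, e1, e6]

/-- Firm nonexpansiveness of the proximal operator. -/
lemma aux_prox_firm {s : ℝ} (hs : 0 < s) {g : E → ℝ} (hgconv : ConvexOn ℝ Set.univ g)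
    (P : E → E) (hP : ∀ v, IsMinOn (fun z => s * g z + ‖z - v‖ ^ 2 / 2) Set.univ (P v))
    (a b : E) :
    ‖P a - P b‖ ^ 2 ≤ ⟪a - b, P a - P b⟫ := by
  have key : ∀ v q : E, ⟪v - P v, q - P v⟫ ≤ s * (g q - g (P v)) := by
    intro v q
    set p := P v with hp
    have main : ∀ t : ℝ, t ∈ Ioc (0:ℝ) 1 →
        ⟪v - p, q - p⟫ ≤ s * (g q - g p) + t * (‖q - p‖ ^ 2 / 2) := by
      intro t ht
      have hmin := hP v (mem_univ (p + t • (q - p)))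
      simp only at hmin
      have hconvpt : g (p + t • (q - p)) ≤ (1 - t) * g p + t * g q := by
        have hcv := hgconv.2 (mem_univ p) (mem_univ q)
          (by linarith [ht.2] : (0:ℝ) ≤ 1 - t) (le_of_lt ht.1) (by ring)
        have he : (1 - t) • p + t • q = p + t • (q - p) := by
          rw [smul_sub, sub_smul, one_smul]; abel
        rw [he] at hcv
        simpa using hcv
      have hnorm : ‖p + t • (q - p) - v‖ ^ 2 =
          ‖p - v‖ ^ 2 + 2 * (t * ⟪p - v, q - p⟫) + t ^ 2 * ‖q - p‖ ^ 2 := by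
        have he : p + t • (q - p) - v = (p - v) + t • (q - p) := by abel
        rw [he, norm_add_sq_real, real_inner_smul_right, norm_smul]
        rw [Real.norm_eq_abs, abs_of_pos ht.1, mul_pow]
        try ring
      have hineq : s * g p + ‖p - v‖ ^ 2 / 2 ≤
          s * ((1 - t) * g p + t * g q) +
          (‖p - v‖ ^ 2 + 2 * (t * ⟪p - v, q - p⟫) + t ^ 2 * ‖q - p‖ ^ 2) / 2 := by
        calc s * g p + ‖p - v‖ ^ 2 / 2
            ≤ s * g (p + t • (q - p)) + ‖p + t • (q - p) - v‖ ^ 2 / 2 := hmin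
          _ ≤ _ := by
              rw [hnorm]
              have hm := mul_le_mul_of_nonneg_left hconvpt hs.le
              linarith
      have hinner : ⟪v - p, q - p⟫ = -⟪p - v, q - p⟫ := by
        rw [← inner_neg_left]; congr 1; abel
      rw [hinner]
      have ht0 := ht.1
      have h' : 0 ≤ t * (s * (g q - g p) + ⟪p - v, q - p⟫ + t * (‖q - p‖ ^ 2 / 2)) := by
        nlinarith [hineq]
      have h'' : 0 ≤ s * (g q - g p) + ⟪p - v, q - p⟫ + t * (‖q - p‖ ^ 2 / 2) :=
        nonneg_of_mul_nonneg_right h' ht0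
      linarith
    have hlim : Filter.Tendsto (fun t : ℝ => s * (g q - g p) + t * (‖q - p‖ ^ 2 / 2))
        (nhdsWithin 0 (Ioi 0)) (nhds (s * (g q - g p))) := by
      have hten : Filter.Tendsto (fun t : ℝ => s * (g q - g p) + t * (‖q - p‖ ^ 2 / 2))
          (nhds 0) (nhds (s * (g q - g p) + 0 * (‖q - p‖ ^ 2 / 2))) :=
        Filter.Tendsto.add tendsto_const_nhds
          ((continuous_id.mul continuous_const).tendsto 0)
      simp only [zero_mul, add_zero] at hten
      exact hten.mono_left nhdsWithin_le_nhds
    refine ge_of_tendsto hlim ?_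
    filter_upwards [Ioc_mem_nhdsGT (by norm_num : (0:ℝ) < 1)] with t ht
    exact main t ht
  have k1 := key a (P b)
  have k2 := key b (P a)
  have e1 : ⟪a - P a, P b - P a⟫ + ⟪b - P b, P a - P b⟫
      = -⟪a - b, P a - P b⟫ + ‖P a - P b‖ ^ 2 := by
    have hx : ⟪a - P a, P b - P a⟫ = -⟪a - P a, P a - P b⟫ := by
      rw [← inner_neg_right]; congr 1; abel
    have hy : a - P a - (b - P b) = (a - b) - (P a - P b) := by abel
    have hz : ⟪a - P a, P a - P b⟫ - ⟪b - P b, P a - P b⟫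
        = ⟪a - b, P a - P b⟫ - ‖P a - P b‖ ^ 2 := by
      rw [← inner_sub_left, hy, inner_sub_left, real_inner_self_eq_norm_sq]
    rw [hx]
    linarith
  nlinarith [k1, k2, e1]

end Helpers

set_option maxHeartbeats 1000000 in
/-- gradient bound for an approximation `v_i = u_i - e_i`:
`‖G_{sF}(v_i)‖ ≤ L√2 ‖e_i‖ + ‖G_{sF}(u_i)‖`, where
`G_{sF}(u) = (1/s)(u - P_{sg}(u - s ∇f(u)))`, `s = 1/L`. -/
theorem generalized_gradient_error_bound (N : ℕ) (L s : ℝ) (hL : 0 < L) (hs : s = 1 / L)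
    (f : EuclideanSpace ℝ (Fin N) → ℝ)
    (f' : EuclideanSpace ℝ (Fin N) → EuclideanSpace ℝ (Fin N))
    (hfconv : ConvexOn ℝ Set.univ f)
    (hgrad : ∀ x, HasGradientAt f (f' x) x)
    (hlip : LipschitzWith (Real.toNNReal L) f')
    (g : EuclideanSpace ℝ (Fin N) → ℝ)
    (hgconv : ConvexOn ℝ Set.univ g) (hgcont : Continuous g)
    (P : EuclideanSpace ℝ (Fin N) → EuclideanSpace ℝ (Fin N))
    (hP : ∀ v, IsMinOn (fun z => s * g z + ‖z - v‖ ^ 2 / 2) Set.univ (P v))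
    (G : EuclideanSpace ℝ (Fin N) → EuclideanSpace ℝ (Fin N))
    (hG : ∀ x, G x = (1 / s) • (x - P (x - s • f' x)))
    (u e : EuclideanSpace ℝ (Fin N)) :
    ‖G (u - e)‖ ≤ L * Real.sqrt 2 * ‖e‖ + ‖G u‖ := by
  have hs0 : 0 < s := by rw [hs]; positivity
  set v := u - e with hv
  set a := u - s • f' u with ha
  set b := v - s • f' v with hb
  set d := u - v with hd
  set w := s • (f' u - f' v) with hw
  set π := P a - P b with hπ
  have hde : d = e := by rw [hd, hv]; abel
  have hδ : a - b = d - w := by rw [ha, hb, hd, hw, smul_sub]; abel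
  have hco := aux_cocoercive hL hfconv hgrad hlip u v
  have h1 : ‖w‖ ^ 2 ≤ ⟪w, d⟫ := by
    have hwn : ‖w‖ ^ 2 = s ^ 2 * ‖f' u - f' v‖ ^ 2 := by
      rw [hw, norm_smul, Real.norm_eq_abs, abs_of_pos hs0, mul_pow]
    have hwd : ⟪w, d⟫ = s * ⟪f' u - f' v, u - v⟫ := by
      rw [hw, hd, real_inner_smul_left]
    rw [hwn, hwd]
    have hm : s * ((1 / L) * ‖f' u - f' v‖ ^ 2) ≤ s * ⟪f' u - f' v, u - v⟫ :=
      mul_le_mul_of_nonneg_left hco hs0.le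
    have hsL : s ^ 2 = s * (1 / L) := by rw [hs]; ring
    calc s ^ 2 * ‖f' u - f' v‖ ^ 2 = s * (1 / L * ‖f' u - f' v‖ ^ 2) := by
          rw [hsL]; ring
      _ ≤ s * ⟪f' u - f' v, u - v⟫ := hm
  have h2 : ‖π‖ ^ 2 ≤ ⟪a - b, π⟫ := aux_prox_firm hs0 hgconv P hP a b
  have key : ‖d - π‖ ^ 2 ≤ 2 * ‖d‖ ^ 2 := by
    have hsplit : d - π = w + ((a - b) - π) := by rw [hδ]; abel
    have htri : ‖d - π‖ ≤ ‖w‖ + ‖(a - b) - π‖ := by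
      rw [hsplit]; exact norm_add_le _ _
    have hsq1 : ‖d - π‖ ^ 2 ≤ 2 * ‖w‖ ^ 2 + 2 * ‖(a - b) - π‖ ^ 2 := by
      nlinarith [htri, norm_nonneg (d - π), norm_nonneg w, norm_nonneg ((a - b) - π),
        sq_nonneg (‖w‖ - ‖(a - b) - π‖)]
    have hsq2 : ‖(a - b) - π‖ ^ 2 = ‖a - b‖ ^ 2 - 2 * ⟪a - b, π⟫ + ‖π‖ ^ 2 :=
      norm_sub_sq_real _ _
    have hsq3 : ‖a - b‖ ^ 2 = ‖d‖ ^ 2 - 2 * ⟪d, w⟫ + ‖w‖ ^ 2 := by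
      rw [hδ]; exact norm_sub_sq_real _ _
    have hdw : ⟪d, w⟫ = ⟪w, d⟫ := real_inner_comm _ _
    linarith [h1, h2, hsq1, hsq2, hsq3, hdw, sq_nonneg ‖π‖]
  have hkey' : ‖d - π‖ ≤ Real.sqrt 2 * ‖d‖ := by
    have h2' : Real.sqrt 2 * ‖d‖ = Real.sqrt (2 * ‖d‖ ^ 2) := by
      rw [Real.sqrt_mul (by norm_num : (0:ℝ) ≤ 2), Real.sqrt_sq (norm_nonneg d)]
    rw [h2']
    have hss := Real.sqrt_le_sqrt key
    rwa [Real.sqrt_sq (norm_nonneg (d - π))] at hss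
  have hGu : G u = (1 / s) • (u - P a) := by rw [hG u, ha]
  have hGv : G v = (1 / s) • (v - P b) := by rw [hG v, hb]
  have hdiff : G u - G v = (1 / s) • (d - π) := by
    rw [hGu, hGv, ← smul_sub, hd, hπ]
    congr 1
    abel
  have hnorm : ‖G u - G v‖ = L * ‖d - π‖ := by
    rw [hdiff, norm_smul, Real.norm_eq_abs, abs_of_pos (by positivity : (0:ℝ) < 1 / s), hs]
    field_simp
  have hGvle : ‖G v‖ ≤ ‖G u - G v‖ + ‖G u‖ := by
    calc ‖G v‖ = ‖(G u - G v) - G u‖ := by rw [← norm_neg]; congr 1; abel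
      _ ≤ ‖G u - G v‖ + ‖G u‖ := norm_sub_le _ _
  calc ‖G (u - e)‖ = ‖G v‖ := by rw [hv]
    _ ≤ ‖G u - G v‖ + ‖G u‖ := hGvle
    _ = L * ‖d - π‖ + ‖G u‖ := by rw [hnorm]
    _ ≤ L * (Real.sqrt 2 * ‖d‖) + ‖G u‖ := by
        have hm := mul_le_mul_of_nonneg_left hkey' hL.le
        linarith
    _ = L * Real.sqrt 2 * ‖e‖ + ‖G u‖ := by rw [hde]; ring
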